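/- Let σ > 0 and β_j, β_k ∈ ℝ. Let W_j and W_k be independent real random variables, with W_j Gaussian with mean β_j and variance σ² and W_k Gaussian with mean β_k and variance σ², and set c_j = |W_j|, c_k = |W_k|. Then P(c_j < c_k) = 2·L((|β_j| − |β_k|)/(√2·σ), −|β_k|/σ, 1/√2) + 2·L((|β_j| + |β_k|)/(√2·σ), |β_k|/σ, 1/√2) + Φ((|β_j| − |β_k|)/(√2·σ)) + Φ((|β_j| + |β_k|)/(√2·σ)) − 2. -/

import Mathlib

open MeasureTheory ProbabilityTheory Real
open Set
open scoped ENNReal NNReal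

/-- The standard normal cumulative distribution function Φ. -/
noncomputable def stdNormalCDF (x : ℝ) : ℝ :=
  ((gaussianReal 0 1) (Set.Iic x)).toReal

/-- `L(a, b, 1/√2) = P(X₁ > a, X₂ > b)` where `X₁ = Z₁`, `X₂ = (Z₁ + Z₂)/√2` for
`Z₁, Z₂` independent standard normals, so that `(X₁, X₂)` is bivariate normal with
standard normal marginals and correlation `1/√2`. -/
noncomputable def Lorthant (a b : ℝ) : ℝ :=
  (((gaussianReal 0 1).prod (gaussianReal 0 1))
    {z : ℝ × ℝ | a < z.1 ∧ b < (z.1 + z.2) / Real.sqrt 2}).toReal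

namespace AGC

lemma sqrt2_pos : (0:ℝ) < Real.sqrt 2 := Real.sqrt_pos.2 (by norm_num)
lemma sq_sqrt2 : (Real.sqrt 2) ^ 2 = 2 := Real.sq_sqrt (by norm_num)

noncomputable def nu : Measure ℝ := gaussianReal 0 1

instance : IsProbabilityMeasure nu := by unfold nu; infer_instance

lemma nu_atom (c : ℝ) : nu {c} = 0 :=
  gaussianReal_absolutelyContinuous 0 (by norm_num) (volume_singleton)

lemma nu_map_neg : nu.map (fun x => -x) = nu := by
  have h := gaussianReal_map_const_mul (μ := 0) (v := 1) (-1)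
  have : (fun x : ℝ => -x) = ((-1 : ℝ) * ·) := by funext x; ring
  rw [this]
  unfold nu
  rw [h]
  norm_num

noncomputable def P2 : Measure (ℝ × ℝ) := nu.prod nu

instance : IsProbabilityMeasure P2 := by unfold P2; infer_instance

lemma mp_neg : MeasurePreserving (fun x : ℝ => -x) nu nu := ⟨measurable_neg, nu_map_neg⟩

lemma mp_negFst : MeasurePreserving (fun p : ℝ × ℝ => (-p.1, p.2)) P2 P2 :=
  mp_neg.prod (MeasurePreserving.id nu)

lemma mp_negSnd : MeasurePreserving (fun p : ℝ × ℝ => (p.1, -p.2)) P2 P2 :=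
  (MeasurePreserving.id nu).prod mp_neg

lemma mp_negBoth : MeasurePreserving (fun p : ℝ × ℝ => (-p.1, -p.2)) P2 P2 :=
  mp_neg.prod mp_neg

lemma mp_swap : MeasurePreserving (fun p : ℝ × ℝ => (p.2, p.1)) P2 P2 :=
  ⟨measurable_swap, Measure.prod_swap⟩

noncomputable def rotMap : ℝ × ℝ → ℝ × ℝ :=
  fun p => ((p.1 + p.2) / Real.sqrt 2, (p.2 - p.1) / Real.sqrt 2)

lemma measurable_rotMap : Measurable rotMap := by unfold rotMap; fun_prop

noncomputable def rotHomeo : Homeomorph (ℝ × ℝ) (ℝ × ℝ) where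
  toFun := rotMap
  invFun := fun p => ((p.1 - p.2) / Real.sqrt 2, (p.1 + p.2) / Real.sqrt 2)
  left_inv := by
    intro p
    have h := sq_sqrt2
    have hne := ne_of_gt sqrt2_pos
    unfold rotMap
    ext <;> simp only <;> field_simp <;> rw [h] <;> ring
  right_inv := by
    intro p
    have h := sq_sqrt2
    have hne := ne_of_gt sqrt2_pos
    unfold rotMap
    ext <;> simp only <;> field_simp <;> rw [h] <;> ring
  continuous_toFun := by unfold rotMap; fun_prop
  continuous_invFun := by fun_prop

noncomputable def rotEquiv : (ℝ × ℝ) ≃ᵐ (ℝ × ℝ) := rotHomeo.toMeasurableEquiv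

lemma rot_map_volume : Measure.map rotMap (volume : Measure (ℝ × ℝ)) = volume := by
  have hne := ne_of_gt sqrt2_pos
  set s : ℝ := (Real.sqrt 2)⁻¹ with hs
  let M : Matrix (Fin 2) (Fin 2) ℝ := !![s, s; -s, s]
  let L := Matrix.toLin (Module.Basis.finTwoProd ℝ) (Module.Basis.finTwoProd ℝ) M
  have hL : rotMap = ⇑L := by
    funext p
    show rotMap p = Matrix.toLin (Module.Basis.finTwoProd ℝ) (Module.Basis.finTwoProd ℝ) M p
    rw [Matrix.toLin_finTwoProd_apply]
    unfold rotMap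
    ext <;> simp only [hs] <;> rw [div_eq_mul_inv] <;> ring
  have hdet : LinearMap.det L = 1 := by
    have : LinearMap.det L = M.det := LinearMap.det_toLin _ _
    rw [this, Matrix.det_fin_two_of]
    have h2 : s ^ 2 = 2⁻¹ := by
      rw [hs, ← Real.sqrt_inv]
      rw [Real.sq_sqrt (by norm_num)]
    nlinarith [h2]
  haveI : (volume : Measure (ℝ × ℝ)).IsAddHaarMeasure :=
    (Measure.volume_eq_prod ℝ ℝ) ▸ Measure.prod.instIsAddHaarMeasure volume volume
  rw [hL, Measure.map_linearMap_addHaar_eq_smul_addHaar _ (by rw [hdet]; norm_num), hdet]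
  norm_num

lemma prod_withDensity (f g : ℝ → ℝ≥0∞) (hf : Measurable f) (hg : Measurable g)
    [SigmaFinite (volume.withDensity f)] [SigmaFinite (volume.withDensity g)] :
    (volume.withDensity f).prod (volume.withDensity g)
      = ((volume : Measure ℝ).prod (volume : Measure ℝ)).withDensity
          (fun p => f p.1 * g p.2) := by
  refine (Measure.prod_eq fun s t hs ht => ?_)
  rw [withDensity_apply _ (hs.prod ht), ← Measure.prod_restrict,
    lintegral_prod_mul (hf.aemeasurable.restrict) (hg.aemeasurable.restrict),
    withDensity_apply _ hs, withDensity_apply _ ht]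

lemma map_withDensity_equiv (e : (ℝ × ℝ) ≃ᵐ (ℝ × ℝ)) (ρ : ℝ × ℝ → ℝ≥0∞) (hρ : Measurable ρ)
    (h : Measure.map e (volume : Measure (ℝ × ℝ)) = volume) :
    Measure.map e ((volume : Measure (ℝ × ℝ)).withDensity ρ)
      = (volume : Measure (ℝ × ℝ)).withDensity (fun x => ρ (e.symm x)) := by
  ext s hs
  rw [Measure.map_apply e.measurable hs, withDensity_apply _ (e.measurable hs),
    withDensity_apply _ hs]
  have : ∫⁻ x in s, ρ (e.symm x) ∂(volume : Measure (ℝ × ℝ))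
      = ∫⁻ x in s, ρ (e.symm x) ∂(Measure.map e volume) := by rw [h]
  rw [this, setLIntegral_map (f := fun x => ρ (e.symm x)) hs
    (hρ.comp e.symm.measurable) e.measurable]
  simp

lemma pdf_prod_eq {a b u v : ℝ} (h : u^2 + v^2 = a^2 + b^2) :
    gaussianPDFReal 0 1 a * gaussianPDFReal 0 1 b
      = gaussianPDFReal 0 1 u * gaussianPDFReal 0 1 v := by
  simp only [gaussianPDFReal, sub_zero]
  rw [mul_mul_mul_comm, ← Real.exp_add, mul_mul_mul_comm, ← Real.exp_add]
  congr 2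
  push_cast
  linarith [h]

lemma nu_withDensity : nu = volume.withDensity (gaussianPDF 0 1) :=
  gaussianReal_of_var_ne_zero 0 one_ne_zero

instance : SigmaFinite (volume.withDensity (gaussianPDF 0 1)) := by
  rw [← nu_withDensity]; infer_instance

lemma P2_withDensity : P2 = (volume : Measure (ℝ × ℝ)).withDensity
    (fun p => gaussianPDF 0 1 p.1 * gaussianPDF 0 1 p.2) := by
  unfold P2
  rw [nu_withDensity,
    prod_withDensity _ _ (measurable_gaussianPDF 0 1) (measurable_gaussianPDF 0 1),
    ← Measure.volume_eq_prod]

lemma rho_rot_inv (x : ℝ × ℝ) :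
    gaussianPDF 0 1 ((x.1 - x.2) / Real.sqrt 2) * gaussianPDF 0 1 ((x.1 + x.2) / Real.sqrt 2)
      = gaussianPDF 0 1 x.1 * gaussianPDF 0 1 x.2 := by
  rw [gaussianPDF, gaussianPDF, gaussianPDF, gaussianPDF,
    ← ENNReal.ofReal_mul (gaussianPDFReal_nonneg _ _ _),
    ← ENNReal.ofReal_mul (gaussianPDFReal_nonneg _ _ _)]
  congr 1
  refine pdf_prod_eq ?_
  rw [div_pow, div_pow, sq_sqrt2]
  ring

lemma rot_map_P2 : Measure.map rotMap P2 = P2 := by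
  have hcoe : rotMap = ⇑rotEquiv := rfl
  rw [P2_withDensity, hcoe,
    map_withDensity_equiv rotEquiv (fun p => gaussianPDF 0 1 p.1 * gaussianPDF 0 1 p.2)
      (show Measurable fun p : ℝ × ℝ => gaussianPDF 0 1 p.1 * gaussianPDF 0 1 p.2 from
        ((measurable_gaussianPDF 0 1).comp measurable_fst).mul
        ((measurable_gaussianPDF 0 1).comp measurable_snd))
      (by rw [← hcoe]; exact rot_map_volume)]
  congr 1
  funext x
  have hsymm : rotEquiv.symm x = ((x.1 - x.2) / Real.sqrt 2, (x.1 + x.2) / Real.sqrt 2) := rfl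
  rw [hsymm]
  exact rho_rot_inv x

lemma mp_rot : MeasurePreserving rotMap P2 P2 := ⟨measurable_rotMap, rot_map_P2⟩


/-! ### Probability layer -/

noncomputable def pr (s : Set (ℝ × ℝ)) : ℝ := (P2 s).toReal

noncomputable def phi (c : ℝ) : ℝ := ((gaussianReal 0 1) (Set.Iic c)).toReal

noncomputable def Ifn (c d : ℝ) : ℝ := pr {p : ℝ × ℝ | c < p.1 ∧ p.2 < p.1 + d}

noncomputable def Ffn (d : ℝ) : ℝ := pr {p : ℝ × ℝ | p.2 < p.1 + d}

lemma pr_congr {s t : Set (ℝ × ℝ)} (h : s =ᵐ[P2] t) : pr s = pr t := by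
  unfold pr; rw [measure_congr h]

lemma pr_union {s t : Set (ℝ × ℝ)} (hd : Disjoint s t) (ht : MeasurableSet t) :
    pr (s ∪ t) = pr s + pr t := by
  unfold pr
  rw [measure_union hd ht, ENNReal.toReal_add (measure_ne_top _ _) (measure_ne_top _ _)]

lemma pr_univ : pr univ = 1 := by unfold pr; simp

lemma pr_preimage {f : ℝ × ℝ → ℝ × ℝ} {s : Set (ℝ × ℝ)} (hf : MeasurePreserving f P2 P2)
    (hs : MeasurableSet s) : pr (f ⁻¹' s) = pr s := by
  unfold pr; rw [hf.measure_preimage hs.nullMeasurableSet]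

lemma ae_eq_of_subsets {s t n₁ n₂ : Set (ℝ × ℝ)} (h1 : s \ t ⊆ n₁) (h2 : t \ s ⊆ n₂)
    (hn1 : P2 n₁ = 0) (hn2 : P2 n₂ = 0) : s =ᵐ[P2] t :=
  ae_eq_set.2 ⟨measure_mono_null h1 hn1, measure_mono_null h2 hn2⟩

lemma null_vert (c : ℝ) : P2 {p : ℝ × ℝ | p.1 = c} = 0 := by
  unfold P2
  have h : {p : ℝ × ℝ | p.1 = c} = ({c} : Set ℝ) ×ˢ (univ : Set ℝ) := by
    ext ⟨x, y⟩; simp [Set.mem_prod, eq_comm]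
  rw [h, Measure.prod_prod, nu_atom]
  simp

lemma null_graph (f : ℝ → ℝ) (hf : Measurable f) : P2 {p : ℝ × ℝ | p.2 = f p.1} = 0 := by
  unfold P2
  have hms : MeasurableSet {p : ℝ × ℝ | p.2 = f p.1} :=
    measurableSet_eq_fun measurable_snd (hf.comp measurable_fst)
  rw [Measure.prod_apply hms]
  have h : ∀ x : ℝ, nu (Prod.mk x ⁻¹' {p : ℝ × ℝ | p.2 = f p.1}) = 0 := by
    intro x
    have : (Prod.mk x ⁻¹' {p : ℝ × ℝ | p.2 = f p.1}) = {f x} := by ext y; simp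
    rw [this, nu_atom]
  simp [nu_atom]

lemma ms_fst_lt (c : ℝ) : MeasurableSet {p : ℝ × ℝ | c < p.1} :=
  measurableSet_lt measurable_const measurable_fst

lemma ms_fst_lt' (c : ℝ) : MeasurableSet {p : ℝ × ℝ | p.1 < c} :=
  measurableSet_lt measurable_fst measurable_const

lemma ms_If (c d : ℝ) : MeasurableSet {p : ℝ × ℝ | c < p.1 ∧ p.2 < p.1 + d} :=
  (ms_fst_lt c).inter (measurableSet_lt measurable_snd (measurable_fst.add_const d))

lemma ms_Ff (d : ℝ) : MeasurableSet {p : ℝ × ℝ | p.2 < p.1 + d} :=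
  measurableSet_lt measurable_snd (measurable_fst.add_const d)

lemma nu_Iio (c : ℝ) : nu (Iio c) = nu (Iic c) := by
  have h : Iic c = Iio c ∪ {c} := by
    ext x; simp [le_iff_lt_or_eq]
  rw [h, measure_union (by simp) (measurableSet_singleton c), nu_atom]
  simp

lemma pr_fst_lt (c : ℝ) : pr {p : ℝ × ℝ | p.1 < c} = phi c := by
  unfold pr phi P2
  have h : {p : ℝ × ℝ | p.1 < c} = (Iio c) ×ˢ (univ : Set ℝ) := by
    ext p; simp
  rw [h, Measure.prod_prod, nu_Iio]
  unfold nu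
  simp

lemma pr_snd_lt (c : ℝ) : pr {p : ℝ × ℝ | p.2 < c} = phi c := by
  unfold pr phi P2
  have h : {p : ℝ × ℝ | p.2 < c} = (univ : Set ℝ) ×ˢ (Iio c) := by
    ext p; simp
  rw [h, Measure.prod_prod, nu_Iio]
  unfold nu
  simp

lemma pr_corner (c e : ℝ) : pr {p : ℝ × ℝ | p.1 < c ∧ p.2 < e} = phi c * phi e := by
  unfold pr phi P2
  have h : {p : ℝ × ℝ | p.1 < c ∧ p.2 < e} = (Iio c) ×ˢ (Iio e) := by
    ext p; simp [Set.mem_prod]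
  rw [h, Measure.prod_prod, nu_Iio, nu_Iio]
  unfold nu
  rw [ENNReal.toReal_mul]

lemma phi_neg (t : ℝ) : phi (-t) = 1 - phi t := by
  have h1 : nu ((fun x : ℝ => -x) ⁻¹' (Iic (-t))) = nu (Iic (-t)) :=
    mp_neg.measure_preimage measurableSet_Iic.nullMeasurableSet
  have h2 : (fun x : ℝ => -x) ⁻¹' (Iic (-t)) = Ici t := by
    ext x; simp
  rw [h2] at h1
  have h3 : nu (Iio t) + nu (Ici t) = 1 := by
    rw [← measure_union (Iio_disjoint_Ici le_rfl) measurableSet_Ici, Iio_union_Ici]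
    exact measure_univ
  have h4 : (nu (Iio t)).toReal + (nu (Ici t)).toReal = 1 := by
    rw [← ENNReal.toReal_add (measure_ne_top _ _) (measure_ne_top _ _), h3]
    rfl
  rw [nu_Iio] at h4
  unfold phi
  have : nu (Iic (-t)) = nu (Ici t) := h1.symm
  show (nu (Iic (-t))).toReal = 1 - (nu (Iic t)).toReal
  rw [this]
  linarith


/-! ### Core relations -/

lemma pr_eq_of_subset {s t n : Set (ℝ × ℝ)} (hst : s ⊆ t) (h : t ⊆ s ∪ n) (hn : P2 n = 0) :
    pr s = pr t := by
  unfold pr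
  congr 1
  refine le_antisymm (measure_mono hst) ?_
  calc P2 t ≤ P2 (s ∪ n) := measure_mono h
    _ ≤ P2 s + P2 n := measure_union_le _ _
    _ = P2 s := by rw [hn, add_zero]

lemma pr_cover_one {s n : Set (ℝ × ℝ)} (h : ∀ p, p ∈ s ∪ n) (hn : P2 n = 0) : pr s = 1 := by
  rw [pr_eq_of_subset (subset_univ s) (fun p _ => h p) hn, pr_univ]

lemma null_line (d : ℝ) : P2 {p : ℝ × ℝ | p.2 = p.1 + d} = 0 :=
  null_graph (fun x => x + d) (measurable_id.add_const d)

lemma null_horiz (e : ℝ) : P2 {p : ℝ × ℝ | p.2 = e} = 0 :=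
  null_graph (fun _ => e) measurable_const

lemma Ff_reflect (d : ℝ) : pr {p : ℝ × ℝ | p.1 + d < p.2} = Ffn (-d) := by
  unfold Ffn
  rw [← pr_preimage mp_negBoth (ms_Ff (-d))]
  congr 1
  ext p
  simp only [mem_preimage, mem_setOf_eq]
  constructor <;> intro h <;> linarith

lemma Ffl (d : ℝ) : Ffn d + Ffn (-d) = 1 := by
  rw [← Ff_reflect]
  unfold Ffn
  rw [← pr_union (by
      rw [Set.disjoint_left]
      intro p h1 h2
      simp only [mem_setOf_eq] at h1 h2
      linarith)
    (show MeasurableSet {p : ℝ × ℝ | p.1 + d < p.2} from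
      measurableSet_lt (measurable_fst.add_const d) measurable_snd)]
  refine pr_cover_one (n := {p : ℝ × ℝ | p.2 = p.1 + d}) ?_ (null_line d)
  intro p
  simp only [mem_union, mem_setOf_eq]
  rcases lt_trichotomy p.2 (p.1 + d) with h | h | h
  · exact Or.inl (Or.inl h)
  · exact Or.inr h
  · exact Or.inl (Or.inr h)

lemma cell2_eq (c d : ℝ) : pr {p : ℝ × ℝ | p.1 < c ∧ p.1 + d < p.2} = Ifn (-c) (-d) := by
  unfold Ifn
  rw [← pr_preimage mp_negBoth (ms_If (-c) (-d))]
  congr 1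
  ext p
  simp only [mem_preimage, mem_setOf_eq]
  constructor <;> rintro ⟨h1, h2⟩ <;> constructor <;> linarith

lemma Ff_split (c d : ℝ) : Ffn d = Ifn c d + pr {p : ℝ × ℝ | p.1 < c ∧ p.2 < p.1 + d} := by
  unfold Ffn Ifn
  rw [← pr_union (by
      rw [Set.disjoint_left]
      rintro p ⟨h1, _⟩ ⟨h2, _⟩
      linarith)
    (show MeasurableSet {p : ℝ × ℝ | p.1 < c ∧ p.2 < p.1 + d} from
      (ms_fst_lt' c).inter (measurableSet_lt measurable_snd (measurable_fst.add_const d)))]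
  refine (pr_eq_of_subset ?_ ?_ (null_vert c)).symm
  · rintro p (⟨_, h⟩ | ⟨_, h⟩) <;> exact h
  · intro p hp
    simp only [mem_setOf_eq] at hp
    simp only [mem_union, mem_setOf_eq]
    rcases lt_trichotomy p.1 c with h | h | h
    · exact Or.inl (Or.inr ⟨h, hp⟩)
    · exact Or.inr h
    · exact Or.inl (Or.inl ⟨h, hp⟩)

lemma phi_split (c d : ℝ) :
    phi c = pr {p : ℝ × ℝ | p.1 < c ∧ p.1 + d < p.2}
      + pr {p : ℝ × ℝ | p.1 < c ∧ p.2 < p.1 + d} := by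
  rw [← pr_fst_lt c]
  rw [← pr_union (by
      rw [Set.disjoint_left]
      rintro p ⟨_, h1⟩ ⟨_, h2⟩
      linarith)
    (show MeasurableSet {p : ℝ × ℝ | p.1 < c ∧ p.2 < p.1 + d} from
      (ms_fst_lt' c).inter (measurableSet_lt measurable_snd (measurable_fst.add_const d)))]
  refine (pr_eq_of_subset ?_ ?_ (null_line d)).symm
  · rintro p (⟨h, _⟩ | ⟨h, _⟩) <;> exact h
  · intro p hp
    simp only [mem_setOf_eq] at hp
    simp only [mem_union, mem_setOf_eq]
    rcases lt_trichotomy p.2 (p.1 + d) with h | h | h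
    · exact Or.inl (Or.inr ⟨hp, h⟩)
    · exact Or.inr h
    · exact Or.inl (Or.inl ⟨hp, h⟩)

lemma Rrel (c d c' d' : ℝ) (hc' : c' = -c) (hd' : d' = -d) :
    Ifn c d - Ifn c' d' = Ffn d - phi c := by
  subst hc' hd'
  have h1 := Ff_split c d
  have h2 := phi_split c d
  have h3 := cell2_eq c d
  linarith

lemma Srel (c d e d' : ℝ) (he : c + d = e) (hd' : d' = -d) :
    Ifn c d + Ifn e d' = 1 - phi c * phi e := by
  subst hd'
  subst he
  have hB : pr {p : ℝ × ℝ | p.1 + d < p.2 ∧ c + d < p.2} = Ifn (c + d) (-d) := by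
    unfold Ifn
    rw [← pr_preimage mp_swap (ms_If (c + d) (-d))]
    congr 1
    ext p
    simp only [mem_preimage, mem_setOf_eq]
    constructor <;> rintro ⟨h1, h2⟩ <;> constructor <;> linarith
  rw [← hB, ← pr_corner c (c + d)]
  have hms2 : MeasurableSet {p : ℝ × ℝ | p.1 + d < p.2 ∧ c + d < p.2} :=
    (measurableSet_lt (measurable_fst.add_const d) measurable_snd).inter
      (measurableSet_lt measurable_const measurable_snd)
  have hms3 : MeasurableSet {p : ℝ × ℝ | p.1 < c ∧ p.2 < c + d} :=
    (ms_fst_lt' c).inter (measurableSet_lt measurable_snd measurable_const)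
  have hd1 : Disjoint {p : ℝ × ℝ | c < p.1 ∧ p.2 < p.1 + d}
      {p : ℝ × ℝ | p.1 + d < p.2 ∧ c + d < p.2} := by
    rw [Set.disjoint_left]; rintro p ⟨_, h1⟩ ⟨h2, _⟩; linarith
  have hd2 : Disjoint ({p : ℝ × ℝ | c < p.1 ∧ p.2 < p.1 + d}
      ∪ {p : ℝ × ℝ | p.1 + d < p.2 ∧ c + d < p.2}) {p : ℝ × ℝ | p.1 < c ∧ p.2 < c + d} := by
    rw [Set.disjoint_left]
    rintro p (⟨h1, _⟩ | ⟨_, h1⟩) ⟨h2, h3⟩ <;> linarith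
  have htot : Ifn c d + pr {p : ℝ × ℝ | p.1 + d < p.2 ∧ c + d < p.2}
      + pr {p : ℝ × ℝ | p.1 < c ∧ p.2 < c + d} = 1 := by
    unfold Ifn
    rw [← pr_union hd1 hms2, ← pr_union hd2 hms3]
    refine pr_cover_one
      (n := {p : ℝ × ℝ | p.1 = c} ∪ ({p : ℝ × ℝ | p.2 = p.1 + d} ∪ {p : ℝ × ℝ | p.2 = c + d}))
      ?_ (measure_union_null (null_vert c) (measure_union_null (null_line d) (null_horiz (c + d))))
  
    intro p
    simp only [mem_union, mem_setOf_eq]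
    rcases lt_trichotomy p.1 c with hx | hx | hx <;>
      rcases lt_trichotomy p.2 (p.1 + d) with hy | hy | hy <;>
        rcases lt_trichotomy p.2 (c + d) with hz | hz | hz <;>
          first
            | tauto
            | (exfalso; linarith)
  linarith


/-! ### Rotation-based relations -/

lemma If_rot (c d c' d' : ℝ) (hc' : c' = -(d / Real.sqrt 2)) (hd' : d' = -(Real.sqrt 2 * c)) :
    Ifn c d = Ifn c' d' := by
  subst hc' hd'
  have h2 : Real.sqrt 2 * Real.sqrt 2 = 2 := Real.mul_self_sqrt (by norm_num)
  have hpos := sqrt2_pos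
  unfold Ifn
  rw [← pr_preimage mp_rot (ms_If c d)]
  have hset : rotMap ⁻¹' {p : ℝ × ℝ | c < p.1 ∧ p.2 < p.1 + d}
      = {p : ℝ × ℝ | Real.sqrt 2 * c < p.1 + p.2 ∧ -(d / Real.sqrt 2) < p.1} := by
    ext p
    unfold rotMap
    simp only [mem_preimage, mem_setOf_eq]
    rw [lt_div_iff₀ hpos, div_lt_iff₀ hpos, add_mul, div_mul_cancel₀ _ (ne_of_gt hpos)]
    constructor
    · rintro ⟨h1, h3⟩
      constructor
      · linarith
      · rw [neg_lt, lt_div_iff₀ hpos]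
        have h4 : -2 * p.1 < d * Real.sqrt 2 := by linarith
        have h5 := mul_lt_mul_of_pos_right h4 hpos
        have h6 : d * Real.sqrt 2 * Real.sqrt 2 = 2 * d := by rw [mul_assoc, h2]; ring
        rw [h6] at h5
        linarith
    · rintro ⟨h1, h3⟩
      rw [neg_lt, lt_div_iff₀ hpos] at h3
      have h5 := mul_lt_mul_of_pos_right h3 hpos
      have h6 : -p.1 * Real.sqrt 2 * Real.sqrt 2 = -2 * p.1 := by rw [mul_assoc, h2]; ring
      rw [h6] at h5
      constructor
      · linarith
      · linarith
  rw [hset, ← pr_preimage mp_negSnd (ms_If (-(d / Real.sqrt 2)) (-(Real.sqrt 2 * c)))]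
  congr 1
  ext p
  simp only [mem_preimage, mem_setOf_eq]
  constructor
  · rintro ⟨h1, h3⟩
    exact ⟨h3, by linarith⟩
  · rintro ⟨h1, h3⟩
    exact ⟨by linarith, h1⟩

lemma Lorthant_eq (a b : ℝ) : Lorthant a b = Ifn a (-(Real.sqrt 2 * b)) := by
  have hpos := sqrt2_pos
  unfold Lorthant Ifn
  have hP : ((gaussianReal 0 1).prod (gaussianReal 0 1)) = P2 := rfl
  rw [hP]
  show pr _ = pr _
  rw [← pr_preimage mp_negSnd (ms_If a (-(Real.sqrt 2 * b)))]
  congr 1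
  ext p
  simp only [mem_preimage, mem_setOf_eq]
  rw [lt_div_iff₀ hpos]
  constructor
  · rintro ⟨h1, h2⟩
    exact ⟨h1, by nlinarith⟩
  · rintro ⟨h1, h2⟩
    exact ⟨h1, by nlinarith⟩

lemma Ff_phi (d : ℝ) : Ffn d = phi (d / Real.sqrt 2) := by
  have hpos := sqrt2_pos
  unfold Ffn
  rw [← pr_snd_lt (d / Real.sqrt 2)]
  rw [← pr_preimage mp_rot (measurableSet_lt measurable_snd measurable_const)]
  congr 1
  ext p
  unfold rotMap
  simp only [mem_preimage, mem_setOf_eq]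
  rw [div_lt_div_iff_of_pos_right hpos]
  constructor <;> intro h <;> linarith

lemma stdNormalCDF_eq_phi (c : ℝ) : stdNormalCDF c = phi c := rfl


/-! ### Half-plane and J relations -/

lemma pr_fst_gt (c : ℝ) : pr {p : ℝ × ℝ | c < p.1} = 1 - phi c := by
  have h : pr ({p : ℝ × ℝ | c < p.1} ∪ {p : ℝ × ℝ | p.1 < c}) = 1 := by
    refine pr_cover_one (n := {p : ℝ × ℝ | p.1 = c}) ?_ (null_vert c)
    intro p
    simp only [mem_union, mem_setOf_eq]
    rcases lt_trichotomy p.1 c with h | h | h <;> tauto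
  rw [pr_union (by
      rw [Set.disjoint_left]; intro p h1 h2
      simp only [mem_setOf_eq] at h1 h2; linarith)
    (ms_fst_lt' c), pr_fst_lt] at h
  linarith

lemma Jrel (c e : ℝ) : pr {p : ℝ × ℝ | c < p.1 ∧ p.1 + e < p.2} = 1 - phi c - Ifn c e := by
  have hsplit : pr {p : ℝ × ℝ | c < p.1}
      = pr ({p : ℝ × ℝ | c < p.1 ∧ p.2 < p.1 + e} ∪ {p : ℝ × ℝ | c < p.1 ∧ p.1 + e < p.2}) := by
    refine (pr_eq_of_subset ?_ ?_ (null_line e)).symm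
    · rintro p (⟨h, _⟩ | ⟨h, _⟩) <;> exact h
    · intro p hp
      simp only [mem_setOf_eq] at hp
      simp only [mem_union, mem_setOf_eq]
      rcases lt_trichotomy p.2 (p.1 + e) with h | h | h
      · exact Or.inl (Or.inl ⟨hp, h⟩)
      · exact Or.inr h
      · exact Or.inl (Or.inr ⟨hp, h⟩)
  rw [pr_union (by rw [Set.disjoint_left]; rintro p ⟨_, h1⟩ ⟨_, h2⟩; linarith)
    (show MeasurableSet {p : ℝ × ℝ | c < p.1 ∧ p.1 + e < p.2} from
      (ms_fst_lt c).inter (measurableSet_lt (measurable_fst.add_const e) measurable_snd)),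
    pr_fst_gt] at hsplit
  unfold Ifn
  linarith

/-! ### The two half events -/

lemma Eplus (A B : ℝ) : pr {p : ℝ × ℝ | |p.1 + A| < p.2 + B}
    = 1 - Ifn (-A) (A - B) - Ifn A (-A - B) := by
  have hD2 : pr {p : ℝ × ℝ | p.1 < -A ∧ p.2 < -p.1 + (-A - B)} = Ifn A (-A - B) := by
    unfold Ifn
    rw [← pr_preimage mp_negFst (ms_If A (-A - B))]
    congr 1
    ext p
    simp only [mem_preimage, mem_setOf_eq]
    constructor <;> rintro ⟨h1, h2⟩ <;> exact ⟨by linarith, by linarith⟩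
  have hms1 : MeasurableSet {p : ℝ × ℝ | |p.1 + A| < p.2 + B} :=
    measurableSet_lt (measurable_fst.add_const A).abs (measurable_snd.add_const B)
  have hmsD2 : MeasurableSet {p : ℝ × ℝ | p.1 < -A ∧ p.2 < -p.1 + (-A - B)} :=
    (ms_fst_lt' (-A)).inter (measurableSet_lt measurable_snd (measurable_fst.neg.add_const _))
  have hdisj1 : Disjoint {p : ℝ × ℝ | |p.1 + A| < p.2 + B}
      {p : ℝ × ℝ | -A < p.1 ∧ p.2 < p.1 + (A - B)} := by
    rw [Set.disjoint_left]
    rintro p h1 ⟨h2, h3⟩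
    simp only [mem_setOf_eq] at h1
    rcases abs_cases (p.1 + A) with ⟨hab, _⟩ | ⟨hab, _⟩ <;> linarith
  have hdisj2 : Disjoint ({p : ℝ × ℝ | |p.1 + A| < p.2 + B}
      ∪ {p : ℝ × ℝ | -A < p.1 ∧ p.2 < p.1 + (A - B)})
      {p : ℝ × ℝ | p.1 < -A ∧ p.2 < -p.1 + (-A - B)} := by
    rw [Set.disjoint_left]
    rintro p (h1 | ⟨h1, h2⟩) ⟨h3, h4⟩
    · simp only [mem_setOf_eq] at h1
      rcases abs_cases (p.1 + A) with ⟨hab, _⟩ | ⟨hab, _⟩ <;> linarith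
    · linarith
  have hcov : pr (({p : ℝ × ℝ | |p.1 + A| < p.2 + B}
      ∪ {p : ℝ × ℝ | -A < p.1 ∧ p.2 < p.1 + (A - B)})
      ∪ {p : ℝ × ℝ | p.1 < -A ∧ p.2 < -p.1 + (-A - B)}) = 1 := by
    refine pr_cover_one (n := {p : ℝ × ℝ | p.1 = -A}
      ∪ ({p : ℝ × ℝ | p.2 = p.1 + (A - B)} ∪ {p : ℝ × ℝ | p.2 = -p.1 + (-A - B)})) ?_
      (measure_union_null (null_vert (-A)) (measure_union_null (null_line (A - B))
        (null_graph (fun x => -x + (-A - B)) (measurable_neg.add_const _))))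
    intro p
    simp only [mem_union, mem_setOf_eq]
    rcases lt_trichotomy p.1 (-A) with hx | hx | hx
    · rcases lt_trichotomy p.2 (-p.1 + (-A - B)) with hy | hy | hy
      · tauto
      · tauto
      · have : |p.1 + A| < p.2 + B := by
          rcases abs_cases (p.1 + A) with ⟨hab, _⟩ | ⟨hab, _⟩ <;> linarith
        tauto
    · tauto
    · rcases lt_trichotomy p.2 (p.1 + (A - B)) with hy | hy | hy
      · tauto
      · tauto
      · have : |p.1 + A| < p.2 + B := by
          rcases abs_cases (p.1 + A) with ⟨hab, _⟩ | ⟨hab, _⟩ <;> linarith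
        tauto
  rw [pr_union hdisj2 hmsD2, pr_union hdisj1 (ms_If (-A) (A - B)), hD2] at hcov
  have h5 : pr {p : ℝ × ℝ | -A < p.1 ∧ p.2 < p.1 + (A - B)} = Ifn (-A) (A - B) := rfl
  rw [h5] at hcov
  linarith

lemma Eminus (A B : ℝ) : pr {p : ℝ × ℝ | p.2 + B < -|p.1 + A|}
    = 1 - Ifn (-A) (A + B) - Ifn A (B - A) := by
  have hM1 : pr {p : ℝ × ℝ | -A < p.1 ∧ p.2 < -p.1 - (A + B)} = 1 - phi (-A) - Ifn (-A) (A + B) := by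
    rw [← Jrel (-A) (A + B), ← pr_preimage mp_negSnd
      (show MeasurableSet {p : ℝ × ℝ | -A < p.1 ∧ p.1 + (A + B) < p.2} from
        (ms_fst_lt (-A)).inter (measurableSet_lt (measurable_fst.add_const _) measurable_snd))]
    congr 1
    ext p
    simp only [mem_preimage, mem_setOf_eq]
    constructor <;> rintro ⟨h1, h2⟩ <;> exact ⟨h1, by linarith⟩
  have hM2 : pr {p : ℝ × ℝ | p.1 < -A ∧ p.2 < p.1 + (A - B)} = 1 - phi A - Ifn A (B - A) := by
    rw [← Jrel A (B - A), ← pr_preimage mp_negBoth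
      (show MeasurableSet {p : ℝ × ℝ | A < p.1 ∧ p.1 + (B - A) < p.2} from
        (ms_fst_lt A).inter (measurableSet_lt (measurable_fst.add_const _) measurable_snd))]
    congr 1
    ext p
    simp only [mem_preimage, mem_setOf_eq]
    constructor <;> rintro ⟨h1, h2⟩ <;> exact ⟨by linarith, by linarith⟩
  have hsplit : pr {p : ℝ × ℝ | p.2 + B < -|p.1 + A|}
      = pr ({p : ℝ × ℝ | -A < p.1 ∧ p.2 < -p.1 - (A + B)}
        ∪ {p : ℝ × ℝ | p.1 < -A ∧ p.2 < p.1 + (A - B)}) := by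
    refine (pr_eq_of_subset ?_ ?_ (null_vert (-A))).symm
    · rintro p (⟨h1, h2⟩ | ⟨h1, h2⟩) <;> simp only [mem_setOf_eq] <;>
        rcases abs_cases (p.1 + A) with ⟨hab, _⟩ | ⟨hab, _⟩ <;> linarith
    · intro p hp
      simp only [mem_setOf_eq] at hp
      simp only [mem_union, mem_setOf_eq]
      rcases lt_trichotomy p.1 (-A) with hx | hx | hx
      · refine Or.inl (Or.inr ⟨hx, ?_⟩)
        rcases abs_cases (p.1 + A) with ⟨hab, _⟩ | ⟨hab, _⟩ <;> linarith
      · exact Or.inr hx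
      · refine Or.inl (Or.inl ⟨hx, ?_⟩)
        rcases abs_cases (p.1 + A) with ⟨hab, _⟩ | ⟨hab, _⟩ <;> linarith
  rw [hsplit, pr_union (by
      rw [Set.disjoint_left]; rintro p ⟨h1, _⟩ ⟨h2, _⟩; linarith)
    (show MeasurableSet {p : ℝ × ℝ | p.1 < -A ∧ p.2 < p.1 + (A - B)} from
      (ms_fst_lt' (-A)).inter (measurableSet_lt measurable_snd (measurable_fst.add_const _))),
    hM1, hM2]
  have hpa := phi_neg A
  linarith


/-! ### Main 2D identity -/

lemma main2D (A B : ℝ) : pr {p : ℝ × ℝ | |p.1 + A| < |p.2 + B|}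
    = 2 * Lorthant ((A - B) / Real.sqrt 2) (-B) + 2 * Lorthant ((A + B) / Real.sqrt 2) B
      + stdNormalCDF ((A - B) / Real.sqrt 2) + stdNormalCDF ((A + B) / Real.sqrt 2) - 2 := by
  have hsetsplit : {p : ℝ × ℝ | |p.1 + A| < |p.2 + B|}
      = {p : ℝ × ℝ | |p.1 + A| < p.2 + B} ∪ {p : ℝ × ℝ | p.2 + B < -|p.1 + A|} := by
    ext p
    simp only [mem_union, mem_setOf_eq]
    rw [lt_abs]
    constructor
    · rintro (h | h)
      · exact Or.inl h
      · exact Or.inr (by linarith)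
    · rintro (h | h)
      · exact Or.inl h
      · exact Or.inr (by linarith)
  have h0 : pr {p : ℝ × ℝ | |p.1 + A| < |p.2 + B|}
      = (1 - Ifn (-A) (A - B) - Ifn A (-A - B)) + (1 - Ifn (-A) (A + B) - Ifn A (B - A)) := by
    rw [hsetsplit, pr_union (by
        rw [Set.disjoint_left]
        intro p h1 h2
        simp only [mem_setOf_eq] at h1 h2
        have := abs_nonneg (p.1 + A)
        linarith)
      (show MeasurableSet {p : ℝ × ℝ | p.2 + B < -|p.1 + A|} from
        measurableSet_lt (measurable_snd.add_const B) (measurable_fst.add_const A).abs.neg),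
      Eplus, Eminus]
  have hL1 : Lorthant ((A - B) / Real.sqrt 2) (-B) = Ifn (-B) (B - A) := by
    rw [Lorthant_eq]
    refine If_rot _ _ _ _ ?_ ?_
    · field_simp
    · field_simp; ring
  have hL2 : Lorthant ((A + B) / Real.sqrt 2) B = Ifn B (-(A + B)) := by
    rw [Lorthant_eq]
    refine If_rot _ _ _ _ ?_ ?_
    · field_simp
    · field_simp
  have hC1 : stdNormalCDF ((A - B) / Real.sqrt 2) = Ffn (A - B) := by
    rw [stdNormalCDF_eq_phi, ← Ff_phi]
  have hC2 : stdNormalCDF ((A + B) / Real.sqrt 2) = Ffn (A + B) := by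
    rw [stdNormalCDF_eq_phi, ← Ff_phi]
  rw [hL1, hL2, hC1, hC2]
  have S1 := Srel (-B) (B - A) (-A) (A - B) (by ring) (by ring)
  have S2 := Srel B (-(A + B)) (-A) (A + B) (by ring) (by ring)
  have S3 := Srel B (A - B) A (B - A) (by ring) (by ring)
  have S4 := Srel (-B) (A + B) A (-A - B) (by ring) (by ring)
  have R1 := Rrel (-B) (B - A) B (A - B) (by ring) (by ring)
  have R2 := Rrel B (-(A + B)) (-B) (A + B) (by ring) (by ring)
  have FF1 := Ffl (A - B)
  rw [show -(A - B) = B - A by ring] at FF1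
  have FF2 := Ffl (A + B)
  have NA := phi_neg A
  have NB := phi_neg B
  linear_combination h0 - S1 - S2 - S3 - S4 - R1 - R2 - FF1 - FF2
    + (phi (-B) + phi B) * NA + 2 * NB


/-! ### sign normalization -/

lemma flipA (A B : ℝ) : pr {p : ℝ × ℝ | |p.1 + A| < |p.2 + B|}
    = pr {p : ℝ × ℝ | |p.1 + -A| < |p.2 + B|} := by
  rw [← pr_preimage mp_negFst (measurableSet_lt ((measurable_fst.add_const (-A)).abs)
    ((measurable_snd.add_const B).abs))]
  congr 1
  ext p
  simp only [mem_preimage, mem_setOf_eq]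
  rw [show -p.1 + -A = -(p.1 + A) by ring, abs_neg]

lemma flipB (A B : ℝ) : pr {p : ℝ × ℝ | |p.1 + A| < |p.2 + B|}
    = pr {p : ℝ × ℝ | |p.1 + A| < |p.2 + -B|} := by
  rw [← pr_preimage mp_negSnd (measurableSet_lt ((measurable_fst.add_const A).abs)
    ((measurable_snd.add_const (-B)).abs))]
  congr 1
  ext p
  simp only [mem_preimage, mem_setOf_eq]
  rw [show -p.2 + -B = -(p.2 + B) by ring, abs_neg]

lemma absnorm (A B : ℝ) : pr {p : ℝ × ℝ | |p.1 + A| < |p.2 + B|}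
    = pr {p : ℝ × ℝ | |p.1 + abs A| < |p.2 + abs B|} := by
  have h1 : pr {p : ℝ × ℝ | |p.1 + A| < |p.2 + B|}
      = pr {p : ℝ × ℝ | |p.1 + abs A| < |p.2 + B|} := by
    rcases abs_cases A with ⟨h, _⟩ | ⟨h, _⟩
    · rw [h]
    · rw [h]; exact flipA A B
  rw [h1]
  rcases abs_cases B with ⟨h, _⟩ | ⟨h, _⟩
  · rw [h]
  · rw [h]; exact flipB (abs A) B

end AGC

theorem abs_gaussian_compare_prob
    {Ω : Type*} [MeasurableSpace Ω] (μ : Measure Ω) [IsProbabilityMeasure μ]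
    (σ βj βk : ℝ) (hσ : 0 < σ)
    (Wj Wk : Ω → ℝ) (hWjm : Measurable Wj) (hWkm : Measurable Wk)
    (hind : IndepFun Wj Wk μ)
    (hWj : Measure.map Wj μ = gaussianReal βj (Real.toNNReal (σ ^ 2)))
    (hWk : Measure.map Wk μ = gaussianReal βk (Real.toNNReal (σ ^ 2))) :
    (μ {ω | |Wj ω| < |Wk ω|}).toReal =
      2 * Lorthant ((|βj| - |βk|) / (Real.sqrt 2 * σ)) (-|βk| / σ)
        + 2 * Lorthant ((|βj| + |βk|) / (Real.sqrt 2 * σ)) (|βk| / σ)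
        + stdNormalCDF ((|βj| - |βk|) / (Real.sqrt 2 * σ))
        + stdNormalCDF ((|βj| + |βk|) / (Real.sqrt 2 * σ)) - 2 := by
  have hσ' : σ ≠ 0 := ne_of_gt hσ
  -- step 1: the affine representation of the gaussians
  have hgauss : ∀ β : ℝ, gaussianReal β (Real.toNNReal (σ ^ 2))
      = AGC.nu.map (fun x => σ * x + β) := by
    intro β
    have h1 : AGC.nu.map (σ * ·) = gaussianReal 0 (NNReal.mk (σ ^ 2) (sq_nonneg σ)) := by
      show (gaussianReal 0 1).map (σ * ·) = _
      rw [gaussianReal_map_const_mul]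
      norm_num
    have h2 : (fun x => σ * x + β) = (· + β) ∘ (σ * ·) := rfl
    rw [h2, ← Measure.map_map (measurable_add_const β) (measurable_const_mul σ), h1,
      gaussianReal_map_add_const, zero_add]
    congr 1
    exact (Real.toNNReal_of_nonneg (sq_nonneg σ)).symm ▸ rfl
  -- step 2: joint distribution
  have hS : MeasurableSet {p : ℝ × ℝ | |p.1| < |p.2|} :=
    measurableSet_lt measurable_fst.abs measurable_snd.abs
  have hjoint : μ.map (fun ω => (Wj ω, Wk ω))
      = (gaussianReal βj (Real.toNNReal (σ ^ 2))).prod (gaussianReal βk (Real.toNNReal (σ ^ 2))) := by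
    rw [← hWj, ← hWk]
    exact (indepFun_iff_map_prod_eq_prod_map_map hWjm.aemeasurable hWkm.aemeasurable).mp hind
  have hfmeas : Measurable (fun x : ℝ => σ * x + βj) := (measurable_const_mul σ).add_const βj
  have hgmeas : Measurable (fun x : ℝ => σ * x + βk) := (measurable_const_mul σ).add_const βk
  have hμ : μ {ω | |Wj ω| < |Wk ω|}
      = AGC.P2 {p : ℝ × ℝ | |σ * p.1 + βj| < |σ * p.2 + βk|} := by
    have hpre : {ω | |Wj ω| < |Wk ω|} = (fun ω => (Wj ω, Wk ω)) ⁻¹' {p : ℝ × ℝ | |p.1| < |p.2|} :=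
      rfl
    rw [hpre, ← Measure.map_apply (hWjm.prodMk hWkm) hS, hjoint, hgauss βj, hgauss βk,
      Measure.map_prod_map _ _ hfmeas hgmeas,
      Measure.map_apply (hfmeas.prodMap hgmeas) hS]
    rfl
  -- step 3: rescale inside the absolute values
  have hsetdiv : {p : ℝ × ℝ | |σ * p.1 + βj| < |σ * p.2 + βk|}
      = {p : ℝ × ℝ | |p.1 + βj / σ| < |p.2 + βk / σ|} := by
    ext p
    simp only [mem_setOf_eq]
    rw [show σ * p.1 + βj = σ * (p.1 + βj / σ) by field_simp,
      show σ * p.2 + βk = σ * (p.2 + βk / σ) by field_simp,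
      abs_mul, abs_mul, abs_of_pos hσ]
    exact mul_lt_mul_iff_right₀ hσ
  -- step 4: finish
  have hmain := AGC.main2D (abs (βj / σ)) (abs (βk / σ))
  have habsj : abs (βj / σ) = |βj| / σ := by rw [abs_div, abs_of_pos hσ]
  have e1 : (abs (βj / σ) - abs (βk / σ)) / Real.sqrt 2 = (|βj| - |βk|) / (Real.sqrt 2 * σ) := by
    rw [habsj, abs_div, abs_of_pos hσ]
    rw [div_sub_div_same, div_div]
    ring_nf
  have e2 : (abs (βj / σ) + abs (βk / σ)) / Real.sqrt 2 = (|βj| + |βk|) / (Real.sqrt 2 * σ) := by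
    rw [habsj, abs_div, abs_of_pos hσ]
    rw [← add_div, div_div]
    ring_nf
  have e3 : -(abs (βk / σ)) = -|βk| / σ := by rw [abs_div, abs_of_pos hσ, neg_div]
  have e4 : abs (βk / σ) = |βk| / σ := by rw [abs_div, abs_of_pos hσ]
  rw [e1, e2, e3] at hmain
  nth_rewrite 2 [e4] at hmain
  show (μ {ω | |Wj ω| < |Wk ω|}).toReal = _
  rw [hμ, hsetdiv]
  show AGC.pr {p : ℝ × ℝ | |p.1 + βj / σ| < |p.2 + βk / σ|} = _
  rw [AGC.absnorm (βj / σ) (βk / σ)]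
  exact hmain
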